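/- Let Q_1, Q_2, Q_3, Q_4 be the eventually periodic sequences in Z/2Z given by Q_1 = 0100(001001011100)^∞, Q_2 = (010010000111)^∞, Q_3 = 0101(011000011000)^∞, Q_4 = 0101(101000101000)^∞. Then for every i with 1 ≤ i ≤ 4 and every integer k ≥ 0, the Steinhaus triangle of the initial segment Q_i[4k] of length 4k is strongly balanced in Z/2Z. -/

import Mathlib

/-- Next row of a Steinhaus triangle: pairwise sums of adjacent entries. -/
def nextRow {m : ℕ} (l : List (ZMod m)) : List (ZMod m) :=
  List.zipWith (· + ·) l l.tail

/-- The rows of the Steinhaus triangle generated by the first row `l`. -/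
def triangleRows {m : ℕ} (l : List (ZMod m)) : List (List (ZMod m)) :=
  (List.range l.length).map (fun i => nextRow^[i] l)

/-- All entries of the Steinhaus triangle generated by `l`. -/
def triangleEntries {m : ℕ} (l : List (ZMod m)) : List (ZMod m) :=
  (triangleRows l).flatten

/-- The Steinhaus triangle of `l` is balanced: all elements of `ZMod m`
occur with the same multiplicity among its entries. -/
def IsBalanced {m : ℕ} (l : List (ZMod m)) : Prop :=
  ∀ a b : ZMod m, (triangleEntries l).count a = (triangleEntries l).count b

/-- The Steinhaus triangle of `l` is strongly balanced (with respect to a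
given `step`): for every `t` with `step * t ≤ l.length`, the Steinhaus triangle
of the initial segment of `l` of length `l.length - step * t` is balanced. -/
def IsStronglyBalanced {m : ℕ} (step : ℕ) (l : List (ZMod m)) : Prop :=
  ∀ t : ℕ, step * t ≤ l.length → IsBalanced (l.take (l.length - step * t))

/-- The eventually periodic sequence with initial block `I` and period `P`. -/
def evPeriodic {m : ℕ} (I P : List (ZMod m)) : ℕ → ZMod m :=
  fun i => if i < I.length then I.getD i 0 else P.getD ((i - I.length) % P.length) 0

/-- The initial segment of length `l` of the sequence `S`. -/
def seg {m : ℕ} (S : ℕ → ZMod m) (l : ℕ) : List (ZMod m) :=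
  (List.range l).map S

def Q1 : ℕ → ZMod 2 :=
  evPeriodic ([0,1,0,0] : List (ZMod 2)) ([0,0,1,0,0,1,0,1,1,1,0,0] : List (ZMod 2))

def Q2 : ℕ → ZMod 2 :=
  evPeriodic ([] : List (ZMod 2)) ([0,1,0,0,1,0,0,0,0,1,1,1] : List (ZMod 2))

def Q3 : ℕ → ZMod 2 :=
  evPeriodic ([0,1,0,1] : List (ZMod 2)) ([0,1,1,0,0,0,0,1,1,0,0,0] : List (ZMod 2))

def Q4 : ℕ → ZMod 2 :=
  evPeriodic ([0,1,0,1] : List (ZMod 2)) ([1,0,1,0,0,0,1,0,1,0,0,0] : List (ZMod 2))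

namespace SB

/-- The derivative of an infinite binary sequence. -/
def D (S : ℕ → ZMod 2) : ℕ → ZMod 2 := fun j => S j + S (j+1)

/-- Number of ones among the first `l` entries of `U`. -/
def o (U : ℕ → ZMod 2) (l : ℕ) : ℕ := (seg U l).count 1

/-- Number of ones in the Steinhaus triangle of the initial segment of
length `n` of `S`, expressed row-by-row. -/
def g (S : ℕ → ZMod 2) (n : ℕ) : ℕ :=
  ((List.range n).map (fun i => o (D^[i] S) (n - i))).sum

/-- Number of ones of `U` in the window `[4, 16)`. -/
def pc (U : ℕ → ZMod 2) : ℕ := o (fun j => U (4 + j)) 12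

/-- Ones in the top 12 rows of the triangle on a segment of length `m + 12`. -/
def A (S : ℕ → ZMod 2) (m : ℕ) : ℕ :=
  ((List.range 12).map (fun i => o (D^[i] S) (12 + m - i))).sum

def CA (S : ℕ → ZMod 2) : ℕ := ((List.range 12).map (fun i => pc (D^[i] S))).sum

lemma nextRow_seg (S : ℕ → ZMod 2) (n : ℕ) :
    nextRow (seg S (n+1)) = seg (D S) n := by
  apply List.ext_getElem
  · simp [nextRow, seg]
  · intro i h1 h2
    simp only [nextRow, seg, List.getElem_zipWith, List.getElem_tail, List.getElem_map,
      List.getElem_range]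
    rfl

lemma iterate_nextRow_seg (i : ℕ) : ∀ (S : ℕ → ZMod 2) (n : ℕ),
    nextRow^[i] (seg S (n+i)) = seg (D^[i] S) n := by
  induction i with
  | zero => intro S n; simp
  | succ i ih =>
    intro S n
    rw [Function.iterate_succ_apply, Function.iterate_succ_apply,
      show n + (i+1) = (n+i) + 1 by omega, nextRow_seg, ih]

lemma count_tri (S : ℕ → ZMod 2) (n : ℕ) :
    (triangleEntries (seg S n)).count 1 = g S n := by
  simp only [triangleEntries, triangleRows, List.count_flatten, List.map_map, g,
    show (seg S n).length = n by simp [seg]]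
  congr 1
  apply List.map_congr_left
  intro i hi
  have hi' : i < n := List.mem_range.mp hi
  simp only [Function.comp_apply]
  rw [show n = (n - i) + i by omega, iterate_nextRow_seg]
  simp [o]

lemma list_sum_map_add (t : List ℕ) (f h : ℕ → ℕ) :
    (t.map (fun x => f x + h x)).sum = (t.map f).sum + (t.map h).sum := by
  induction t with
  | nil => simp
  | cons a t ih => simp [ih]; omega

lemma len_tri (S : ℕ → ZMod 2) (n : ℕ) :
    2 * (triangleEntries (seg S n)).length = n * (n + 1) := by
  simp only [triangleEntries, triangleRows, List.length_flatten, List.map_map,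
    show (seg S n).length = n by simp [seg]]
  have h1 : (List.range n).map (List.length ∘ fun i => nextRow^[i] (seg S n))
      = (List.range n).map (fun i => n - i) := by
    apply List.map_congr_left
    intro i hi
    have hi' : i < n := List.mem_range.mp hi
    simp only [Function.comp_apply]
    rw [show n = (n - i) + i by omega, iterate_nextRow_seg]
    simp [seg]
  rw [h1]
  have h2 : ∀ m : ℕ, ((List.range m).map (fun i => m - i)).sum = ∑ i ∈ Finset.range m, (i+1) := by
    intro m
    induction m with
    | zero => simp
    | succ m ih =>
      rw [List.range_succ, List.map_append, List.sum_append, Finset.sum_range_succ]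
      simp only [List.map_cons, List.map_nil]
      have e : (List.range m).map (fun i => m + 1 - i)
          = (List.range m).map (fun i => (m - i) + 1) := by
        apply List.map_congr_left
        intro i hi
        have := List.mem_range.mp hi
        omega
      rw [e, list_sum_map_add, ih]
      simp
      omega
  rw [h2]
  have h3 : ∑ i ∈ Finset.range n, (i+1) = (∑ i ∈ Finset.range n, i) + n := by
    rw [Finset.sum_add_distrib]; simp
  rw [h3, Nat.mul_add]
  have h4 := Finset.sum_range_id_mul_two n
  cases n with
  | zero => simp
  | succ k =>
    simp only [Nat.succ_sub_one] at h4
    nlinarith [h4]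

lemma o_add (U : ℕ → ZMod 2) (a b : ℕ) :
    o U (a + b) = o U a + o (fun j => U (a + j)) b := by
  simp only [o, seg, List.range_add, List.map_append, List.count_append, List.map_map]
  rfl

lemma periodic_o (V : ℕ → ZMod 2) (h : ∀ j, V (j + 12) = V j) (l : ℕ) :
    o V (l + 12) = o V l + o V 12 := by
  rw [show l + 12 = 12 + l by omega, o_add]
  have : (fun j => V (12 + j)) = V := by funext j; rw [show 12 + j = j + 12 by omega, h]
  rw [this]; omega

lemma o_step (U : ℕ → ZMod 2) (hU : ∀ j, U (j + 16) = U (j + 4)) (l : ℕ) (hl : 4 ≤ l) :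
    o U (l + 12) = o U l + pc U := by
  obtain ⟨r, rfl⟩ : ∃ r, l = 4 + r := ⟨l - 4, by omega⟩
  have hV : ∀ j, U (4 + (j + 12)) = U (4 + j) := by
    intro j
    rw [show 4 + (j + 12) = j + 16 by omega, hU, show j + 4 = 4 + j by omega]
  have h1 : o U (4 + (r + 12)) = o U 4 + o (fun j => U (4 + j)) (r + 12) := o_add U 4 (r+12)
  have h2 : o U (4 + r) = o U 4 + o (fun j => U (4 + j)) r := o_add U 4 r
  have h3 := periodic_o (fun j => U (4 + j)) (fun j => hV j) r
  rw [show 4 + r + 12 = 4 + (r + 12) by omega, h1, h2, h3, pc]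
  omega

lemma shift_D {S : ℕ → ZMod 2} (h : ∀ j, S (j + 16) = S (j + 4)) :
    ∀ j, D S (j + 16) = D S (j + 4) := by
  intro j
  simp only [D]
  rw [h, show j + 16 + 1 = (j + 1) + 16 by omega, h, show j + 1 + 4 = j + 4 + 1 by omega]

lemma shift_Diter {S : ℕ → ZMod 2} (h : ∀ j, S (j + 16) = S (j + 4)) (i : ℕ) :
    ∀ j, D^[i] S (j + 16) = D^[i] S (j + 4) := by
  induction i with
  | zero => exact h
  | succ i ih => rw [Function.iterate_succ_apply']; exact shift_D ih

lemma A_step (S : ℕ → ZMod 2) (hS : ∀ j, S (j + 16) = S (j + 4)) (m : ℕ) (hm : 3 ≤ m) :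
    A S (m + 12) = A S m + CA S := by
  simp only [A, CA]
  rw [← list_sum_map_add]
  apply congrArg
  apply List.map_congr_left
  intro i hi
  have hi' : i < 12 := List.mem_range.mp hi
  have harg : 12 + (m + 12) - i = (12 + m - i) + 12 := by omega
  rw [harg, o_step _ (shift_Diter hS i) _ (by omega)]

lemma e2 (U : ℕ → ZMod 2) : D^[2] U = fun j => U j + U (j + 2) := by
  funext j
  show D (D U) j = _
  simp only [D]
  rw [show j + 1 + 1 = j + 2 by omega]
  linear_combination CharTwo.add_self_eq_zero (U (j + 1))

lemma e4 (U : ℕ → ZMod 2) : D^[4] U = fun j => U j + U (j + 4) := by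
  have h : D^[4] U = D^[2] (D^[2] U) := by
    rw [← Function.iterate_add_apply]
  rw [h, e2, e2]
  funext j
  simp only
  rw [show j + 2 + 2 = j + 4 by omega]
  linear_combination CharTwo.add_self_eq_zero (U (j + 2))

lemma e8 (U : ℕ → ZMod 2) : D^[8] U = fun j => U j + U (j + 8) := by
  have h : D^[8] U = D^[4] (D^[4] U) := by
    rw [← Function.iterate_add_apply]
  rw [h, e4, e4]
  funext j
  simp only
  rw [show j + 4 + 4 = j + 8 by omega]
  linear_combination CharTwo.add_self_eq_zero (U (j + 4))

lemma e16 (U : ℕ → ZMod 2) : D^[16] U = fun j => U j + U (j + 16) := by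
  have h : D^[16] U = D^[8] (D^[8] U) := by
    rw [← Function.iterate_add_apply]
  rw [h, e8, e8]
  funext j
  simp only
  rw [show j + 8 + 8 = j + 16 by omega]
  linear_combination CharTwo.add_self_eq_zero (U (j + 8))

lemma e12 (U : ℕ → ZMod 2) : D^[12] U = fun j => U j + U (j + 4) + U (j + 8) + U (j + 12) := by
  have h : D^[12] U = D^[4] (D^[8] U) := by
    rw [← Function.iterate_add_apply]
  rw [h, e8, e4]
  funext j
  show (fun j => U j + U (j + 8)) j + (fun j => U j + U (j + 8)) (j + 4) = _
  simp only
  rw [show j + 4 + 8 = j + 12 by omega]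
  ring

lemma D12_fix (Q : ℕ → ZMod 2) (hQ : ∀ j, Q (j + 16) = Q (j + 4)) :
    D^[12] (D^[12] Q) = D^[12] Q := by
  have h16 : D^[16] Q = D^[4] Q := by
    rw [e16, e4]
    funext j
    rw [hQ]
  have h24 : D^[24] Q = D^[12] Q := by
    have h1 : D^[24] Q = D^[8] (D^[16] Q) := by rw [← Function.iterate_add_apply]
    have h2 : D^[8] (D^[4] Q) = D^[12] Q := by rw [← Function.iterate_add_apply]
    rw [h1, h16, h2]
  calc D^[12] (D^[12] Q) = D^[24] Q := by rw [← Function.iterate_add_apply]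
  _ = D^[12] Q := h24

lemma g_split (S : ℕ → ZMod 2) (m : ℕ) :
    g S (m + 12) = A S m + g (D^[12] S) m := by
  simp only [g, A]
  rw [show m + 12 = 12 + m by omega, List.range_add, List.map_append, List.sum_append,
    List.map_map]
  have h2 : (List.map ((fun i => o (D^[i] S) (12 + m - i)) ∘ fun x => 12 + x) (List.range m)).sum
      = (List.map (fun i => o (D^[i] (D^[12] S)) (m - i)) (List.range m)).sum := by
    apply congrArg
    apply List.map_congr_left
    intro i _
    simp only [Function.comp_apply]
    rw [show 12 + i = i + 12 by omega, Function.iterate_add_apply,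
      show 12 + m - (i + 12) = m - i by omega]
  rw [h2]

lemma SD (Q : ℕ → ZMod 2) (hQ : ∀ j, Q (j + 16) = Q (j + 4))
    (hCh : CA (D^[12] Q) = 72) (m : ℕ) (hm : 3 ≤ m) :
    g Q (m + 36) + g Q (m + 12) = 2 * g Q (m + 24) + 72 := by
  have hfix : D^[12] (D^[12] Q) = D^[12] Q := D12_fix Q hQ
  have hTshift : ∀ j, (D^[12] Q) (j + 16) = (D^[12] Q) (j + 4) := shift_Diter hQ 12
  have e1 : g Q (m + 36) = A Q (m + 24) + g (D^[12] Q) (m + 24) := by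
    have := g_split Q (m + 24); rwa [show m + 24 + 12 = m + 36 by omega] at this
  have e2 : g Q (m + 24) = A Q (m + 12) + g (D^[12] Q) (m + 12) := by
    have := g_split Q (m + 12); rwa [show m + 12 + 12 = m + 24 by omega] at this
  have e3 : g Q (m + 12) = A Q m + g (D^[12] Q) m := g_split Q m
  have e4 : g (D^[12] Q) (m + 24) = A (D^[12] Q) (m + 12) + g (D^[12] Q) (m + 12) := by
    have := g_split (D^[12] Q) (m + 12)
    rwa [show m + 12 + 12 = m + 24 by omega, hfix] at this
  have e5 : g (D^[12] Q) (m + 12) = A (D^[12] Q) m + g (D^[12] Q) m := by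
    have := g_split (D^[12] Q) m
    rwa [hfix] at this
  have hA1 : A Q (m + 12) = A Q m + CA Q := A_step Q hQ m hm
  have hA2 : A Q (m + 24) = A Q (m + 12) + CA Q := by
    have := A_step Q hQ (m + 12) (by omega)
    rwa [show m + 12 + 12 = m + 24 by omega] at this
  have hAT : A (D^[12] Q) (m + 12) = A (D^[12] Q) m + CA (D^[12] Q) :=
    A_step (D^[12] Q) hTshift m hm
  rw [hCh] at hAT
  omega

lemma main_count (Q : ℕ → ZMod 2) (hQ : ∀ j, Q (j + 16) = Q (j + 4))
    (hCh : CA (D^[12] Q) = 72) (hbase : ∀ j, j ≤ 9 → g Q (4 * j) = j * (4 * j + 1)) :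
    ∀ j, g Q (4 * j) = j * (4 * j + 1) := by
  intro j
  induction j using Nat.strong_induction_on with
  | _ j ih =>
    by_cases hj : j ≤ 9
    · exact hbase j hj
    · push_neg at hj
      obtain ⟨n, rfl⟩ : ∃ n, j = n + 10 := ⟨j - 10, by omega⟩
      have h6 : g Q (4 * (n + 4)) = (n + 4) * (4 * (n + 4) + 1) := ih (n + 4) (by omega)
      have h3 : g Q (4 * (n + 7)) = (n + 7) * (4 * (n + 7) + 1) := ih (n + 7) (by omega)
      have hsd := SD Q hQ hCh (4 * n + 4) (by omega)
      rw [show 4 * n + 4 + 36 = 4 * (n + 10) by ring, show 4 * n + 4 + 12 = 4 * (n + 4) by ring,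
        show 4 * n + 4 + 24 = 4 * (n + 7) by ring, h6, h3] at hsd
      have key : 2 * ((n + 7) * (4 * (n + 7) + 1)) + 72
          = (n + 10) * (4 * (n + 10) + 1) + (n + 4) * (4 * (n + 4) + 1) := by ring
      set a := (n + 4) * (4 * (n + 4) + 1) with ha
      set b := (n + 7) * (4 * (n + 7) + 1) with hb
      set c := (n + 10) * (4 * (n + 10) + 1) with hc
      omega

lemma c01 (l : List (ZMod 2)) : l.count 0 + l.count 1 = l.length := by
  induction l with
  | nil => simp
  | cons a t ih =>
    have h : a = 0 ∨ a = 1 := by revert a; decide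
    rcases h with h | h <;> subst h <;> simp [List.count_cons] <;> omega

lemma balanced_all (Q : ℕ → ZMod 2) (hcount : ∀ j, g Q (4 * j) = j * (4 * j + 1)) :
    ∀ j, IsBalanced (seg Q (4 * j)) := by
  intro j a b
  have h01 : ∀ a : ZMod 2, a = 0 ∨ a = 1 := by decide
  have hc1 : (triangleEntries (seg Q (4 * j))).count 1 = j * (4 * j + 1) := by
    rw [count_tri]; exact hcount j
  have hlen := len_tri Q (4 * j)
  have hsum := c01 (triangleEntries (seg Q (4 * j)))
  have hx : (4 * j) * (4 * j + 1) = 4 * (j * (4 * j + 1)) := by ring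
  rw [hx] at hlen
  set x := j * (4 * j + 1)
  rcases h01 a with ha | ha <;> rcases h01 b with hb | hb <;> subst ha <;> subst hb
  · rfl
  · omega
  · omega
  · rfl

lemma strongly (Q : ℕ → ZMod 2) (hbal : ∀ j, IsBalanced (seg Q (4 * j))) (k : ℕ) :
    IsStronglyBalanced 4 (seg Q (4 * k)) := by
  intro t ht
  have hl : (seg Q (4 * k)).length = 4 * k := by simp [seg]
  rw [hl] at ht ⊢
  have htake : (seg Q (4 * k)).take (4 * k - 4 * t) = seg Q (4 * (k - t)) := by
    simp only [seg]
    rw [← List.map_take, List.take_range,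
      show (4 * k - 4 * t) ⊓ (4 * k) = 4 * (k - t) by
        rw [Nat.min_def]; split <;> omega]
  rw [htake]
  exact hbal (k - t)

/-- Shift-commutation of `D` with a constant shift. -/
lemma D_iter_shift (U : ℕ → ZMod 2) (c : ℕ) : ∀ i : ℕ,
    D^[i] (fun j => U (c + j)) = fun j => D^[i] U (c + j) := by
  intro i
  induction i with
  | zero => rfl
  | succ i ih =>
    rw [Function.iterate_succ_apply', ih, Function.iterate_succ_apply']
    rfl

lemma pc_eval (U : ℕ → ZMod 2) (i : ℕ) :
    pc (D^[i] U) = (nextRow^[i] (seg (fun j => U (4 + j)) (12 + i))).count 1 := by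
  have h1 : pc (D^[i] U) = (seg (fun j => D^[i] U (4 + j)) 12).count 1 := rfl
  rw [h1, ← D_iter_shift U 4 i, ← iterate_nextRow_seg i (fun j => U (4 + j)) 12]

lemma hshift1 : ∀ j, Q1 (j + 16) = Q1 (j + 4) := by
  intro j
  simp only [Q1, evPeriodic, List.length_cons, List.length_nil]
  rw [if_neg (by omega), if_neg (by omega)]
  congr 1
  omega

lemma hshift2 : ∀ j, Q2 (j + 16) = Q2 (j + 4) := by
  intro j
  simp only [Q2, evPeriodic, List.length_cons, List.length_nil]
  rw [if_neg (by omega), if_neg (by omega)]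
  congr 1
  omega

lemma hshift3 : ∀ j, Q3 (j + 16) = Q3 (j + 4) := by
  intro j
  simp only [Q3, evPeriodic, List.length_cons, List.length_nil]
  rw [if_neg (by omega), if_neg (by omega)]
  congr 1
  omega

lemma hshift4 : ∀ j, Q4 (j + 16) = Q4 (j + 4) := by
  intro j
  simp only [Q4, evPeriodic, List.length_cons, List.length_nil]
  rw [if_neg (by omega), if_neg (by omega)]
  congr 1
  omega

set_option maxRecDepth 40000 in
lemma hCh1 : CA (D^[12] Q1) = 72 := by
  simp only [CA, pc_eval, e12]; decide

set_option maxRecDepth 40000 in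
lemma hCh2 : CA (D^[12] Q2) = 72 := by
  simp only [CA, pc_eval, e12]; decide

set_option maxRecDepth 40000 in
lemma hCh3 : CA (D^[12] Q3) = 72 := by
  simp only [CA, pc_eval, e12]; decide

set_option maxRecDepth 40000 in
lemma hCh4 : CA (D^[12] Q4) = 72 := by
  simp only [CA, pc_eval, e12]; decide

set_option maxRecDepth 40000 in
lemma hbase1 : ∀ j, j ≤ 9 → g Q1 (4 * j) = j * (4 * j + 1) := by
  intro j hj
  interval_cases j <;> rw [← count_tri] <;> decide

set_option maxRecDepth 40000 in
lemma hbase2 : ∀ j, j ≤ 9 → g Q2 (4 * j) = j * (4 * j + 1) := by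
  intro j hj
  interval_cases j <;> rw [← count_tri] <;> decide

set_option maxRecDepth 40000 in
lemma hbase3 : ∀ j, j ≤ 9 → g Q3 (4 * j) = j * (4 * j + 1) := by
  intro j hj
  interval_cases j <;> rw [← count_tri] <;> decide

set_option maxRecDepth 40000 in
lemma hbase4 : ∀ j, j ≤ 9 → g Q4 (4 * j) = j * (4 * j + 1) := by
  intro j hj
  interval_cases j <;> rw [← count_tri] <;> decide

end SB

open SB in
theorem stmt11 (k : ℕ) :
    IsStronglyBalanced 4 (seg Q1 (4 * k)) ∧
    IsStronglyBalanced 4 (seg Q2 (4 * k)) ∧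
    IsStronglyBalanced 4 (seg Q3 (4 * k)) ∧
    IsStronglyBalanced 4 (seg Q4 (4 * k)) :=
  ⟨strongly Q1 (balanced_all Q1 (main_count Q1 hshift1 hCh1 hbase1)) k,
   strongly Q2 (balanced_all Q2 (main_count Q2 hshift2 hCh2 hbase2)) k,
   strongly Q3 (balanced_all Q3 (main_count Q3 hshift3 hCh3 hbase3)) k,
   strongly Q4 (balanced_all Q4 (main_count Q4 hshift4 hCh4 hbase4)) k⟩
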